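/- Under the standing assumption, let p⁰ ∈ S_𝓖 have all marginals positive (p⁰ᵢ(a) > 0 for every locus i and allele a). Then every differentiable solution p : [0,∞) → ℝ^𝓖_{≥0} of the recombination dynamics with p(0) = p⁰ converges, as t → ∞, to the unique strictly positive detailed-balancing equilibrium contained in the stoichiometric compatibility class S(p⁰). -/

import Mathlib

open Finset

/-- Recombination of gametes `g` and `h` following pattern `{I, Iᶜ}`:
`(g_I h_J)ᵢ = gᵢ` for `i ∈ I` and `= hᵢ` for `i ∈ J = Iᶜ`. -/
def recomb {L : Type} [DecidableEq L] {A : L → Type} (I : Finset L)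
    (g h : ∀ i, A i) : ∀ i, A i :=
  fun i => if i ∈ I then g i else h i

/-- The recombination vector field
`F(p) = (1/2) Σ_{g,h} Σ_{{I,J} ∈ 𝓟} c({I,J}) p(g) p(h) (g_I h_J + g_J h_I − g − h)`,
where the sum over unordered patterns `{I,J}` is written as `(1/2) Σ_{I : Finset L}`
(every unordered pattern `{I, Iᶜ}` corresponds to exactly two subsets `I` and `Iᶜ`;
the rate constants satisfy `c I = c Iᶜ`). -/
noncomputable def recF {L : Type} [Fintype L] [DecidableEq L] {A : L → Type}
    [∀ i, Fintype (A i)] [∀ i, DecidableEq (A i)]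
    (c : Finset L → ℝ) (p : (∀ i, A i) → ℝ) : (∀ i, A i) → ℝ :=
  fun x => (1 / 4) * ∑ g : ∀ i, A i, ∑ h : ∀ i, A i, ∑ I : Finset L,
    c I * p g * p h *
      ((if x = recomb I g h then 1 else 0) + (if x = recomb Iᶜ g h then 1 else 0)
        - (if x = g then 1 else 0) - (if x = h then 1 else 0))

/-- The marginal frequency `pᵢ(a) = Σ_{g : gᵢ = a} p(g)`. -/
noncomputable def marg {L : Type} [Fintype L] [DecidableEq L] {A : L → Type}
    [∀ i, Fintype (A i)] [∀ i, DecidableEq (A i)]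
    (p : (∀ i, A i) → ℝ) (i : L) (a : A i) : ℝ :=
  ∑ g : ∀ j, A j, if g i = a then p g else 0

/-- The stoichiometric subspace
`S = span { g_I h_J + g_J h_I − g − h : g,h ∈ 𝓖, {I,J} ∈ 𝓟 with c({I,J}) > 0 }`,
gametes being identified with standard basis vectors of `ℝ^𝓖`. -/
def stoichSpan {L : Type} [Fintype L] [DecidableEq L] (A : L → Type)
    [∀ i, Fintype (A i)] [∀ i, DecidableEq (A i)]
    (c : Finset L → ℝ) : Submodule ℝ ((∀ i, A i) → ℝ) :=
  Submodule.span ℝ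
    { v | ∃ (g h : ∀ i, A i) (I : Finset L), 0 < c I ∧
        v = fun x => (if x = recomb I g h then (1 : ℝ) else 0)
          + (if x = recomb Iᶜ g h then 1 else 0)
          - (if x = g then 1 else 0) - (if x = h then 1 else 0) }


set_option linter.unusedSectionVars false

section Aux
variable {L : Type} [Fintype L] [DecidableEq L] {A : L → Type}
    [∀ i, Fintype (A i)] [∀ i, DecidableEq (A i)]

noncomputable def margOn (S : Finset L) (p : (∀ i, A i) → ℝ) (x : ∀ i, A i) : ℝ :=
  ∑ g : ∀ i, A i, if ∀ i ∈ S, g i = x i then p g else 0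

lemma margOn_univ (p : (∀ i, A i) → ℝ) (x : ∀ i, A i) : margOn univ p x = p x := by
  unfold margOn
  have : ∀ g : ∀ i, A i, (if ∀ i ∈ univ, g i = x i then p g else 0)
      = if g = x then p g else 0 := by
    intro g; refine if_congr ?_ rfl rfl
    simp [funext_iff]
  rw [Finset.sum_congr rfl fun g _ => this g, Finset.sum_ite_eq' univ x p]
  simp

lemma margOn_empty (p : (∀ i, A i) → ℝ) (x : ∀ i, A i) :
    margOn ∅ p x = ∑ g : ∀ i, A i, p g := by
  unfold margOn; simp

lemma margOn_singleton (p : (∀ i, A i) → ℝ) (i : L) (x : ∀ i, A i) :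
    margOn {i} p x = marg p i (x i) := by
  unfold margOn marg
  refine Finset.sum_congr rfl fun g _ => if_congr ?_ rfl rfl
  simp

lemma eq_recomb_iff {I : Finset L} {g h y : ∀ i, A i} :
    y = recomb I g h ↔ ((∀ i ∈ I, g i = y i) ∧ (∀ i ∈ Iᶜ, h i = y i)) := by
  rw [funext_iff]
  constructor
  · intro H
    constructor
    · intro i hi; rw [H i]; simp [recomb, hi]
    · intro i hi; rw [H i]; simp only [Finset.mem_compl] at hi; simp [recomb, hi]
  · rintro ⟨H1, H2⟩ i
    by_cases hi : i ∈ I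
    · simp [recomb, hi, H1 i hi]
    · simp [recomb, hi, H2 i (Finset.mem_compl.2 hi)]

lemma ite_one_mul_ite_one {P Q : Prop} [Decidable P] [Decidable Q] :
    ((if P then (1:ℝ) else 0) * (if Q then (1:ℝ) else 0)) = if P ∧ Q then (1:ℝ) else 0 := by
  by_cases hP : P <;> by_cases hQ : Q <;> simp [hP, hQ]

end Aux

section Aux2
set_option linter.unusedSectionVars false
variable {L : Type} [Fintype L] [DecidableEq L] {A : L → Type}
    [∀ i, Fintype (A i)] [∀ i, DecidableEq (A i)]

lemma double_sum_delta (p : (∀ i, A i) → ℝ) (I : Finset L) (y : ∀ i, A i) :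
    (∑ g : ∀ i, A i, ∑ h : ∀ i, A i,
        p g * p h * (if y = recomb I g h then (1:ℝ) else 0))
      = margOn I p y * margOn Iᶜ p y := by
  unfold margOn
  rw [Finset.sum_mul_sum]
  refine Finset.sum_congr rfl fun g _ => Finset.sum_congr rfl fun h _ => ?_
  by_cases h1 : ∀ i ∈ I, g i = y i <;> by_cases h2 : ∀ i ∈ Iᶜ, h i = y i
  · rw [if_pos (eq_recomb_iff.mpr ⟨h1, h2⟩), if_pos h1, if_pos h2]; ring
  · rw [if_neg (fun hc => h2 (eq_recomb_iff.mp hc).2), if_pos h1, if_neg h2]; ring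
  · rw [if_neg (fun hc => h1 (eq_recomb_iff.mp hc).1), if_neg h1]; ring
  · rw [if_neg (fun hc => h1 (eq_recomb_iff.mp hc).1), if_neg h1]; ring

lemma double_sum_delta_left (p : (∀ i, A i) → ℝ) (y : ∀ i, A i) :
    (∑ g : ∀ i, A i, ∑ h : ∀ i, A i,
        p g * p h * (if y = g then (1:ℝ) else 0))
      = p y * ∑ g : ∀ i, A i, p g := by
  rw [Finset.sum_comm]
  have : ∀ h : ∀ i, A i, (∑ g : ∀ i, A i, p g * p h * (if y = g then (1:ℝ) else 0))
      = p y * p h := by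
    intro h
    rw [Finset.sum_congr rfl (fun g _ => show p g * p h * (if y = g then (1:ℝ) else 0)
        = if y = g then p g * p h else 0 by by_cases hg : y = g <;> simp [hg])]
    rw [Finset.sum_ite_eq univ y (fun g => p g * p h)]
    simp
  rw [Finset.sum_congr rfl fun h _ => this h, ← Finset.mul_sum]

lemma double_sum_delta_right (p : (∀ i, A i) → ℝ) (y : ∀ i, A i) :
    (∑ g : ∀ i, A i, ∑ h : ∀ i, A i,
        p g * p h * (if y = h then (1:ℝ) else 0))
      = p y * ∑ g : ∀ i, A i, p g := by
  have : ∀ g : ∀ i, A i, (∑ h : ∀ i, A i, p g * p h * (if y = h then (1:ℝ) else 0))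
      = p g * p y := by
    intro g
    rw [Finset.sum_congr rfl (fun h _ => show p g * p h * (if y = h then (1:ℝ) else 0)
        = if y = h then p g * p h else 0 by by_cases hh : y = h <;> simp [hh])]
    rw [Finset.sum_ite_eq univ y (fun h => p g * p h)]
    simp
  rw [Finset.sum_congr rfl fun g _ => this g]
  rw [show (∑ g : ∀ i, A i, p g * p y) = (∑ g : ∀ i, A i, p g) * p y from (Finset.sum_mul _ _ _).symm]
  ring

lemma recF_apply (c : Finset L → ℝ) (p : (∀ i, A i) → ℝ) (y : ∀ i, A i) :
    recF c p y = (1/2) * ∑ I : Finset L,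
      c I * (margOn I p y * margOn Iᶜ p y - (∑ g : ∀ i, A i, p g) * p y) := by
  unfold recF
  rw [Finset.sum_congr rfl fun (g : ∀ i, A i) _ => Finset.sum_comm]
  rw [Finset.sum_comm]
  have perI : ∀ I : Finset L,
      (∑ g : ∀ i, A i, ∑ h : ∀ i, A i, c I * p g * p h *
        ((if y = recomb I g h then (1:ℝ) else 0) + (if y = recomb Iᶜ g h then 1 else 0)
          - (if y = g then 1 else 0) - (if y = h then 1 else 0)))
      = 2 * (c I * (margOn I p y * margOn Iᶜ p y - (∑ g : ∀ i, A i, p g) * p y)) := by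
    intro I
    have expand : ∀ g h : ∀ i, A i, c I * p g * p h *
        ((if y = recomb I g h then (1:ℝ) else 0) + (if y = recomb Iᶜ g h then 1 else 0)
          - (if y = g then 1 else 0) - (if y = h then 1 else 0))
        = c I * (p g * p h * (if y = recomb I g h then (1:ℝ) else 0))
          + c I * (p g * p h * (if y = recomb Iᶜ g h then (1:ℝ) else 0))
          - c I * (p g * p h * (if y = g then (1:ℝ) else 0))
          - c I * (p g * p h * (if y = h then (1:ℝ) else 0)) := by
      intro g h; ring
    rw [Finset.sum_congr rfl fun g _ => Finset.sum_congr rfl fun h _ => expand g h]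
    simp only [Finset.sum_sub_distrib, Finset.sum_add_distrib, ← Finset.mul_sum]
    rw [double_sum_delta p I y, double_sum_delta p Iᶜ y, double_sum_delta_left p y,
      double_sum_delta_right p y, compl_compl]
    ring
  rw [Finset.sum_congr rfl fun I _ => perI I, ← Finset.mul_sum]
  ring

end Aux2

section Aux3
set_option linter.unusedSectionVars false
variable {L : Type} [Fintype L] [DecidableEq L] {A : L → Type}
    [∀ i, Fintype (A i)] [∀ i, DecidableEq (A i)]

lemma margOn_pi (S I : Finset L) (p : (∀ i, A i) → ℝ) (x : ∀ i, A i) :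
    margOn S (fun y => margOn I p y * margOn Iᶜ p y) x
      = margOn (S ∩ I) p x * margOn (S \ I) p x := by
  unfold margOn
  -- expand the product of sums, push indicator inside
  have step1 : ∀ y : ∀ i, A i,
      (if ∀ i ∈ S, y i = x i then
          (∑ g : ∀ i, A i, if ∀ i ∈ I, g i = y i then p g else 0) *
          (∑ h : ∀ i, A i, if ∀ i ∈ Iᶜ, h i = y i then p h else 0) else 0)
      = ∑ g : ∀ i, A i, ∑ h : ∀ i, A i,
          p g * p h * ((if y = recomb I g h then (1:ℝ) else 0)
            * (if ∀ i ∈ S, y i = x i then (1:ℝ) else 0)) := by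
    intro y
    rw [Finset.sum_mul_sum]
    by_cases hy : ∀ i ∈ S, y i = x i
    · rw [if_pos hy]
      refine Finset.sum_congr rfl fun g _ => Finset.sum_congr rfl fun h _ => ?_
      rw [if_pos hy]
      by_cases h1 : ∀ i ∈ I, g i = y i <;> by_cases h2 : ∀ i ∈ Iᶜ, h i = y i
      · rw [if_pos (eq_recomb_iff.mpr ⟨h1, h2⟩), if_pos h1, if_pos h2]; ring
      · rw [if_neg (fun hc => h2 (eq_recomb_iff.mp hc).2), if_pos h1, if_neg h2]; ring
      · rw [if_neg (fun hc => h1 (eq_recomb_iff.mp hc).1), if_neg h1]; ring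
      · rw [if_neg (fun hc => h1 (eq_recomb_iff.mp hc).1), if_neg h1]; ring
    · rw [if_neg hy]
      symm
      refine Finset.sum_eq_zero fun g _ => Finset.sum_eq_zero fun h _ => ?_
      rw [if_neg hy]; ring
  rw [Finset.sum_congr rfl fun y _ => step1 y]
  rw [Finset.sum_comm]
  rw [Finset.sum_congr rfl fun g _ => Finset.sum_comm]
  -- now  ∑ g ∑ h ∑ y
  have step2 : ∀ g h : ∀ i, A i,
      (∑ y : ∀ i, A i, p g * p h * ((if y = recomb I g h then (1:ℝ) else 0)
          * (if ∀ i ∈ S, y i = x i then (1:ℝ) else 0)))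
      = p g * p h * ((if ∀ i ∈ S ∩ I, g i = x i then (1:ℝ) else 0)
          * (if ∀ i ∈ S \ I, h i = x i then (1:ℝ) else 0)) := by
    intro g h
    rw [← Finset.mul_sum]
    congr 1
    have : ∀ y : ∀ i, A i,
        ((if y = recomb I g h then (1:ℝ) else 0) * (if ∀ i ∈ S, y i = x i then (1:ℝ) else 0))
        = if y = recomb I g h then (if ∀ i ∈ S, (recomb I g h) i = x i then (1:ℝ) else 0) else 0 := by
      intro y
      by_cases hy : y = recomb I g h
      · subst hy; simp
      · simp [hy]
    rw [Finset.sum_congr rfl fun y _ => this y,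
      Finset.sum_ite_eq' univ (recomb I g h) _]
    rw [if_pos (Finset.mem_univ _)]
    have hsplit : (∀ i ∈ S, (recomb I g h) i = x i)
        ↔ ((∀ i ∈ S ∩ I, g i = x i) ∧ (∀ i ∈ S \ I, h i = x i)) := by
      constructor
      · intro H
        constructor
        · intro i hi
          have := H i (Finset.mem_inter.mp hi).1
          simpa [recomb, (Finset.mem_inter.mp hi).2] using this
        · intro i hi
          have := H i (Finset.mem_sdiff.mp hi).1
          simpa [recomb, (Finset.mem_sdiff.mp hi).2] using this
      · rintro ⟨H1, H2⟩ i hi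
        by_cases hiI : i ∈ I
        · simpa [recomb, hiI] using H1 i (Finset.mem_inter.mpr ⟨hi, hiI⟩)
        · simpa [recomb, hiI] using H2 i (Finset.mem_sdiff.mpr ⟨hi, hiI⟩)
    by_cases hc : ∀ i ∈ S, (recomb I g h) i = x i
    · rw [if_pos hc, if_pos (hsplit.mp hc).1, if_pos (hsplit.mp hc).2]; ring
    · rw [if_neg hc]
      rcases not_and_or.mp (fun hh => hc (hsplit.mpr hh)) with h1 | h1
      · rw [if_neg h1]; ring
      · rw [if_neg h1]; ring
  rw [Finset.sum_congr rfl fun g _ => Finset.sum_congr rfl fun h _ => step2 g h]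
  rw [Finset.sum_mul_sum]
  refine Finset.sum_congr rfl fun g _ => Finset.sum_congr rfl fun h _ => ?_
  by_cases h1 : ∀ i ∈ S ∩ I, g i = x i <;> by_cases h2 : ∀ i ∈ S \ I, h i = x i <;>
    simp [h1, h2] <;> ring

end Aux3

section Aux4
set_option linter.unusedSectionVars false
variable {L : Type} [Fintype L] [DecidableEq L] {A : L → Type}
    [∀ i, Fintype (A i)] [∀ i, DecidableEq (A i)]

lemma margOn_apply (S : Finset L) (p : (∀ i, A i) → ℝ) (x : ∀ i, A i) :
    margOn S p x = ∑ g : ∀ i, A i, if ∀ i ∈ S, g i = x i then p g else 0 := rfl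

lemma margOn_recF (c : Finset L → ℝ) (p : (∀ i, A i) → ℝ) (S : Finset L) (x : ∀ i, A i) :
    margOn S (recF c p) x = (1/2) * ∑ I : Finset L,
      c I * (margOn (S ∩ I) p x * margOn (S \ I) p x
        - (∑ g : ∀ i, A i, p g) * margOn S p x) := by
  have hrw : recF c p = fun y => (1/2) * ∑ I : Finset L,
      c I * (margOn I p y * margOn Iᶜ p y - (∑ g : ∀ i, A i, p g) * p y) :=
    funext fun y => recF_apply c p y
  rw [margOn_apply, Finset.sum_congr rfl fun y _ => congrArg
    (fun z => if ∀ i ∈ S, y i = x i then z else (0:ℝ)) (congrFun hrw y)]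
  have step1 : ∀ y : ∀ i, A i,
      (if ∀ i ∈ S, y i = x i then ((1:ℝ)/2) * ∑ I : Finset L,
          c I * (margOn I p y * margOn Iᶜ p y - (∑ g : ∀ i, A i, p g) * p y) else 0)
      = (1/2) * ∑ I : Finset L,
          (c I * ((if ∀ i ∈ S, y i = x i then margOn I p y * margOn Iᶜ p y else 0)
            - (∑ g : ∀ i, A i, p g) * (if ∀ i ∈ S, y i = x i then p y else 0))) := by
    intro y
    by_cases hy : ∀ i ∈ S, y i = x i
    · simp only [if_pos hy]
    · simp only [if_neg hy]; simp
  rw [Finset.sum_congr rfl fun y _ => step1 y, ← Finset.mul_sum, Finset.sum_comm]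
  congr 1
  refine Finset.sum_congr rfl fun I _ => ?_
  rw [← Finset.mul_sum]
  congr 1
  rw [Finset.sum_sub_distrib, ← Finset.mul_sum]
  have e2 : (∑ y : ∀ i, A i, if ∀ i ∈ S, y i = x i then margOn I p y * margOn Iᶜ p y else 0)
      = margOn (S ∩ I) p x * margOn (S \ I) p x := margOn_pi S I p x
  have e3 : (∑ y : ∀ i, A i, if ∀ i ∈ S, y i = x i then p y else 0) = margOn S p x := rfl
  rw [e2, e3]

lemma sum_recF_zero (c : Finset L → ℝ) (p : (∀ i, A i) → ℝ) :
    ∑ y : ∀ i, A i, recF c p y = 0 := by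
  unfold recF
  rw [← Finset.mul_sum]
  have swap : (∑ y : ∀ i, A i, ∑ g : ∀ i, A i, ∑ h : ∀ i, A i, ∑ I : Finset L,
      c I * p g * p h *
        ((if y = recomb I g h then (1:ℝ) else 0) + (if y = recomb Iᶜ g h then 1 else 0)
          - (if y = g then 1 else 0) - (if y = h then 1 else 0)))
      = ∑ g : ∀ i, A i, ∑ h : ∀ i, A i, ∑ I : Finset L, ∑ y : ∀ i, A i,
      c I * p g * p h *
        ((if y = recomb I g h then (1:ℝ) else 0) + (if y = recomb Iᶜ g h then 1 else 0)
          - (if y = g then 1 else 0) - (if y = h then 1 else 0)) := by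
    rw [Finset.sum_comm]
    refine Finset.sum_congr rfl fun g _ => ?_
    rw [Finset.sum_comm]
    refine Finset.sum_congr rfl fun h _ => ?_
    rw [Finset.sum_comm]
  rw [swap]
  have inner : ∀ g h : ∀ i, A i, ∀ I : Finset L,
      (∑ y : ∀ i, A i, c I * p g * p h *
        ((if y = recomb I g h then (1:ℝ) else 0) + (if y = recomb Iᶜ g h then 1 else 0)
          - (if y = g then 1 else 0) - (if y = h then 1 else 0))) = 0 := by
    intro g h I
    rw [← Finset.mul_sum]
    have : (∑ y : ∀ i, A i,
        ((if y = recomb I g h then (1:ℝ) else 0) + (if y = recomb Iᶜ g h then 1 else 0)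
          - (if y = g then 1 else 0) - (if y = h then 1 else 0))) = 0 := by
      simp only [Finset.sum_sub_distrib, Finset.sum_add_distrib]
      rw [Finset.sum_ite_eq' univ (recomb I g h) (fun _ => (1:ℝ)),
        Finset.sum_ite_eq' univ (recomb Iᶜ g h) (fun _ => (1:ℝ)),
        Finset.sum_ite_eq' univ g (fun _ => (1:ℝ)),
        Finset.sum_ite_eq' univ h (fun _ => (1:ℝ))]
      simp
    rw [this, mul_zero]
  rw [Finset.sum_congr rfl fun g _ => Finset.sum_congr rfl fun h _ =>
    Finset.sum_congr rfl fun I _ => inner g h I]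
  simp

end Aux4

open Filter
section ODE

lemma const_of_deriv_zero {E : Type*} [NormedAddCommGroup E] [NormedSpace ℝ E]
    {f : ℝ → E} (hf : ∀ t, 0 ≤ t → HasDerivAt f 0 t) :
    ∀ t, 0 ≤ t → f t = f 0 := by
  intro t ht
  rcases eq_or_lt_of_le ht with h | h
  · rw [← h]
  · have hcont : ContinuousOn f (Set.Icc 0 t) := fun s hs =>
      ((hf s hs.1).continuousAt).continuousWithinAt
    have hderiv : ∀ s ∈ Set.Ico 0 t, HasDerivWithinAt f 0 (Set.Ici s) s := fun s hs =>
      (hf s hs.1).hasDerivWithinAt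
    exact constant_of_has_deriv_right_zero hcont hderiv t (Set.mem_Icc.mpr ⟨ht, le_refl t⟩)

lemma ode_tendsto {lam beta : ℝ} (hlam : 0 < lam) {u b : ℝ → ℝ}
    (hu : ∀ t, 0 ≤ t → HasDerivAt u (-lam * u t + b t) t)
    (hb : Tendsto b atTop (nhds beta)) :
    Tendsto u atTop (nhds (beta / lam)) := by
  rw [Metric.tendsto_atTop] at hb ⊢
  intro ε hε
  obtain ⟨T₀, hT₀⟩ := hb (lam * ε / 2) (by positivity)
  set T : ℝ := max T₀ 0 with hT
  have hT0 : (0:ℝ) ≤ T := le_max_right _ _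
  have hbT : ∀ s, T ≤ s → |b s - beta| ≤ lam * ε / 2 := by
    intro s hs
    have := hT₀ s (le_trans (le_max_left _ _) hs)
    rw [Real.dist_eq] at this
    exact le_of_lt this
  set C : ℝ := beta / lam with hC
  have hlamC : lam * C = beta := by rw [hC, mul_div_assoc']; exact mul_div_cancel_left₀ _ (ne_of_gt hlam)
  have key : ∀ σ : ℝ, σ = 1 ∨ σ = -1 →
      ∀ᶠ t in atTop, σ * (u t - C) < ε := by
    intro σ hσ
    have hσabs : |σ| = 1 := by rcases hσ with h | h <;> rw [h] <;> norm_num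
    set w : ℝ → ℝ := fun t => (σ * (u t - C) - ε/2) * Real.exp (lam * t) with hw
    have hwderiv : ∀ t, 0 ≤ t →
        HasDerivAt w ((σ * (b t - beta) - lam * (ε/2)) * Real.exp (lam * t)) t := by
      intro t ht
      have h1 : HasDerivAt (fun s => σ * (u s - C) - ε/2) (σ * (-lam * u t + b t)) t :=
        (((hu t ht).sub_const C).const_mul σ).sub_const (ε/2)
      have h2 : HasDerivAt (fun s : ℝ => Real.exp (lam * s)) (Real.exp (lam * t) * lam) t := by
        have := ((hasDerivAt_id t).const_mul lam).exp
        simpa using this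
      have h3 := h1.fun_mul h2
      refine h3.congr_deriv ?_
      linear_combination (-(σ * Real.exp (lam * t))) * hlamC
    have hanti : AntitoneOn w (Set.Ici T) := by
      refine antitoneOn_of_deriv_nonpos (convex_Ici T) ?_ ?_ ?_
      · intro s hs
        exact (hwderiv s (le_trans hT0 hs)).continuousAt.continuousWithinAt
      · intro s hs
        rw [interior_Ici] at hs
        exact (hwderiv s (le_trans hT0 (le_of_lt hs))).differentiableAt.differentiableWithinAt
      · intro s hs
        rw [interior_Ici] at hs
        rw [(hwderiv s (le_trans hT0 (le_of_lt hs))).deriv]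
        have hble : σ * (b s - beta) ≤ lam * ε / 2 := by
          calc σ * (b s - beta) ≤ |σ * (b s - beta)| := le_abs_self _
            _ = |b s - beta| := by rw [abs_mul, hσabs, one_mul]
            _ ≤ lam * ε / 2 := hbT s (le_of_lt hs)
        apply mul_nonpos_of_nonpos_of_nonneg
        · linarith
        · exact le_of_lt (Real.exp_pos _)
    have hexp0 : Tendsto (fun t : ℝ => w T * Real.exp (-(lam * t))) atTop (nhds 0) := by
      have h1 : Tendsto (fun t : ℝ => lam * t) atTop atTop :=
        Tendsto.const_mul_atTop hlam tendsto_id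
      have h2 := Real.tendsto_exp_neg_atTop_nhds_zero.comp h1
      have h3 := h2.const_mul (w T)
      simpa using h3
    rw [Metric.tendsto_atTop] at hexp0
    obtain ⟨T₁, hT₁⟩ := hexp0 (ε/2) (by positivity)
    filter_upwards [eventually_ge_atTop T, eventually_ge_atTop T₁] with t ht1 ht2
    have hwle : w t ≤ w T := hanti (Set.self_mem_Ici) ht1 ht1
    have hdiv : σ * (u t - C) - ε/2 ≤ w T * Real.exp (-(lam * t)) := by
      have hepos := Real.exp_pos (lam * t)
      rw [Real.exp_neg]
      rw [← div_eq_mul_inv, le_div_iff₀ hepos]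
      exact hwle
    have hsmall : w T * Real.exp (-(lam * t)) < ε/2 := by
      have := hT₁ t ht2
      rw [Real.dist_eq, sub_zero] at this
      exact lt_of_le_of_lt (le_abs_self _) this
    linarith
  have h1 := key 1 (Or.inl rfl)
  have h2 := key (-1) (Or.inr rfl)
  obtain ⟨N, hN⟩ := eventually_atTop.mp (h1.and h2)
  refine ⟨N, fun n hn => ?_⟩
  obtain ⟨ha, hb'⟩ := hN n hn
  rw [Real.dist_eq, abs_lt]
  constructor <;> [linarith [hb']; linarith [ha]]

end ODE

section Uniq
set_option linter.unusedSectionVars false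
variable {L : Type} [Fintype L] [DecidableEq L] {A : L → Type}
    [∀ i, Fintype (A i)] [∀ i, DecidableEq (A i)]

lemma recomb_empty (g h : ∀ i, A i) : recomb (∅ : Finset L) g h = h := by
  funext i; simp [recomb]

lemma recomb_univ (g h : ∀ i, A i) : recomb (univ : Finset L) g h = g := by
  funext i; simp [recomb]

lemma recomb_insert (k : L) (S : Finset L) (g h : ∀ i, A i) :
    recomb (insert k S) g h = Function.update (recomb S g h) k (g k) := by
  funext i
  by_cases hik : i = k
  · subst hik; simp [recomb, Function.update_self]
  · rw [Function.update_of_ne hik]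
    simp [recomb, Finset.mem_insert, hik]

lemma recomb_singleton (i : L) (g h : ∀ j, A j) :
    recomb ({i} : Finset L) g h = Function.update h i (g i) := by
  rw [show ({i} : Finset L) = insert i ∅ from rfl, recomb_insert, recomb_empty]

-- pairwise swap identity from detailed balance
lemma pair_swap {r : (∀ i, A i) → ℝ} {c : Finset L → ℝ} (hc : ∀ I, 0 ≤ c I)
    (hsep : ∀ i j : L, i ≠ j →
      0 < ∑ I ∈ univ.filter (fun I : Finset L => i ∈ I ∧ j ∉ I), c I)
    (hdb : ∀ (g h : ∀ i, A i) (I : Finset L), 0 < c I →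
      r g * r h = r (recomb I g h) * r (recomb Iᶜ g h))
    (i j : L) (hij : i ≠ j) (u : ∀ k, A k) (a : A i) (b : A j) :
    r (Function.update (Function.update u i a) j b) * r u
      = r (Function.update u i a) * r (Function.update u j b) := by
  obtain ⟨I, hIf, hIpos⟩ : ∃ I ∈ univ.filter (fun I : Finset L => i ∈ I ∧ j ∉ I), 0 < c I := by
    by_contra hcon
    push_neg at hcon
    have : (∑ I ∈ univ.filter (fun I : Finset L => i ∈ I ∧ j ∉ I), c I) ≤ 0 :=
      Finset.sum_nonpos fun I hI => hcon I hI
    exact absurd (hsep i j hij) (not_lt.mpr this)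
  obtain ⟨hiI, hjI⟩ := (Finset.mem_filter.mp hIf).2
  set hfull : ∀ k, A k := Function.update (Function.update u i a) j b with hhf
  have e1 : recomb I u hfull = Function.update u j b := by
    funext k
    by_cases hk : k ∈ I
    · have hkj : k ≠ j := fun e => hjI (e ▸ hk)
      simp [recomb, hk, Function.update_of_ne hkj]
    · have hki : k ≠ i := fun e => hk (e ▸ hiI)
      by_cases hkj : k = j
      · subst hkj; simp [recomb, hk, hhf]
      · simp [recomb, hk, hhf, Function.update_of_ne hkj, Function.update_of_ne hki]
  have e2 : recomb Iᶜ u hfull = Function.update u i a := by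
    funext k
    by_cases hk : k ∈ I
    · have hkc : k ∉ Iᶜ := by simp [hk]
      have hkj : k ≠ j := fun e => hjI (e ▸ hk)
      by_cases hki : k = i
      · subst hki; simp [recomb, hkc, hhf, Function.update_of_ne hkj]
      · simp [recomb, hkc, hhf, Function.update_of_ne hkj, Function.update_of_ne hki]
    · have hkc : k ∈ Iᶜ := Finset.mem_compl.mpr hk
      have hki : k ≠ i := fun e => hk (e ▸ hiI)
      simp [recomb, hkc, Function.update_of_ne hki]
  have := hdb u hfull I hIpos
  rw [e1, e2] at this
  linarith [this]

lemma claimB {r : (∀ i, A i) → ℝ} (hrpos : ∀ g, 0 < r g)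
    (hps : ∀ (i j : L), i ≠ j → ∀ (u : ∀ k, A k) (a : A i) (b : A j),
      r (Function.update (Function.update u i a) j b) * r u
        = r (Function.update u i a) * r (Function.update u j b)) :
    ∀ (S : Finset L) (j : L), j ∉ S → ∀ (g h : ∀ i, A i),
      r (recomb (insert j S) g h) * r h = r (recomb S g h) * r (recomb {j} g h) := by
  intro S
  induction S using Finset.induction_on with
  | empty =>
    intro j _ g h
    rw [recomb_empty, show insert j (∅ : Finset L) = {j} from rfl]
    ring
  | @insert k S hkS IH =>
    intro j hj g h
    have hjk : j ≠ k := fun e => hj (e ▸ Finset.mem_insert_self k S)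
    have hjS : j ∉ S := fun e => hj (Finset.mem_insert_of_mem e)
    have hswap := hps j k hjk (recomb S g h) (g j) (g k)
    rw [← recomb_insert j S g h, ← recomb_insert k (insert j S) g h,
      ← recomb_insert k S g h, Finset.insert_comm] at hswap
    have hIH := IH j hjS g h
    have hQ : r (recomb S g h) ≠ 0 := ne_of_gt (hrpos _)
    have hR2 : r (recomb (insert j S) g h) ≠ 0 := ne_of_gt (hrpos _)
    apply mul_right_cancel₀ (mul_ne_zero hQ hR2)
    linear_combination (r h * r (recomb (insert j S) g h)) * hswap
      + (r (recomb (insert k S) g h) * r (recomb (insert j S) g h)) * hIH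

lemma claimA {r : (∀ i, A i) → ℝ} (hrpos : ∀ g, 0 < r g)
    (hps : ∀ (i j : L), i ≠ j → ∀ (u : ∀ k, A k) (a : A i) (b : A j),
      r (Function.update (Function.update u i a) j b) * r u
        = r (Function.update u i a) * r (Function.update u j b)) :
    ∀ (S : Finset L) (g h : ∀ i, A i),
      r (recomb S g h) * (r h) ^ S.card = r h * ∏ i ∈ S, r (recomb {i} g h) := by
  intro S
  induction S using Finset.induction_on with
  | empty =>
    intro g h
    simp [recomb_empty]
  | @insert j S hjS IH =>
    intro g h
    rw [Finset.card_insert_of_notMem hjS, Finset.prod_insert hjS, pow_succ]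
    have hB := claimB hrpos hps S j hjS g h
    have hIH := IH g h
    linear_combination ((r h) ^ S.card) * hB + (r (recomb {j} g h)) * hIH

end Uniq

section Uniq2
set_option linter.unusedSectionVars false
variable {L : Type} [Fintype L] [DecidableEq L] {A : L → Type}
    [∀ i, Fintype (A i)] [∀ i, DecidableEq (A i)]

lemma marg_factorization {r : (∀ i, A i) → ℝ} [∀ i, Nonempty (A i)]
    (hrpos : ∀ g, 0 < r g) (hrsum : ∑ g : ∀ i, A i, r g = 1)
    (hps : ∀ (i j : L), i ≠ j → ∀ (u : ∀ k, A k) (a : A i) (b : A j),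
      r (Function.update (Function.update u i a) j b) * r u
        = r (Function.update u i a) * r (Function.update u j b)) :
    ∀ g : ∀ i, A i, r g = ∏ i : L, marg r i (g i) := by
  intro g
  set h₀ : ∀ i, A i := Classical.arbitrary _ with hh₀
  set f : ∀ i, A i → ℝ := fun i a => r (Function.update h₀ i a) with hf
  set n : ℕ := Fintype.card L with hn
  have hfpos : ∀ i a, 0 < f i a := fun i a => hrpos _
  have hident : ∀ g : ∀ i, A i, r g * (r h₀) ^ n = r h₀ * ∏ i : L, f i (g i) := by
    intro g
    have := claimA hrpos hps univ g h₀
    rw [recomb_univ, Finset.card_univ] at this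
    rw [this]
    congr 1
    exact Finset.prod_congr rfl fun i _ => by rw [recomb_singleton]
  set Z : L → ℝ := fun i => ∑ a : A i, f i a with hZ
  have hZpos : ∀ i, 0 < Z i := by
    intro i
    refine Finset.sum_pos (fun a _ => hfpos i a) ?_
    exact univ_nonempty
  have hprodsum : ∀ F : ∀ i, A i → ℝ,
      (∑ g : ∀ i, A i, ∏ i : L, F i (g i)) = ∏ i : L, ∑ a : A i, F i a := by
    intro F
    rw [Finset.prod_univ_sum (fun _ => univ) F, Fintype.piFinset_univ]
  have hsum' : (r h₀) ^ n = r h₀ * ∏ i : L, Z i := by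
    have h1 : (∑ g : ∀ i, A i, r g * (r h₀) ^ n) = (r h₀) ^ n := by
      rw [← Finset.sum_mul, hrsum, one_mul]
    have h2 : (∑ g : ∀ i, A i, r h₀ * ∏ i : L, f i (g i))
        = r h₀ * ∏ i : L, Z i := by
      rw [← Finset.mul_sum, hprodsum]
    rw [← h1, Finset.sum_congr rfl fun g _ => hident g, h2]
  have hrh₀ : r h₀ ≠ 0 := ne_of_gt (hrpos _)
  have hZne : ∀ i, Z i ≠ 0 := fun i => ne_of_gt (hZpos i)
  -- marginal computation
  have hmargf : ∀ (i : L) (a : A i), marg r i a * Z i = f i a := by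
    intro i a
    set F : ∀ j, A j → ℝ :=
      Function.update f i (fun b => if b = a then f i b else 0) with hF
    have hFeq : ∀ g : ∀ j, A j,
        (if g i = a then ∏ j : L, f j (g j) else 0) = ∏ j : L, F j (g j) := by
      intro g
      by_cases hg : g i = a
      · rw [if_pos hg]
        refine Finset.prod_congr rfl fun j _ => ?_
        by_cases hj : j = i
        · subst hj
          rw [hF, Function.update_self, if_pos hg]
        · rw [hF, Function.update_of_ne hj]
      · rw [if_neg hg]
        symm
        refine Finset.prod_eq_zero (Finset.mem_univ i) ?_
        rw [hF, Function.update_self, if_neg hg]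
    have hsum2 : (∑ g : ∀ j, A j, if g i = a then ∏ j : L, f j (g j) else 0)
        = f i a * ∏ j ∈ univ.erase i, Z j := by
      rw [Finset.sum_congr rfl fun g _ => hFeq g, hprodsum F,
        ← Finset.mul_prod_erase univ _ (Finset.mem_univ i)]
      congr 1
      · rw [hF, Function.update_self, Finset.sum_ite_eq' univ a (f i)]
        simp
      · refine Finset.prod_congr rfl fun j hj => ?_
        rw [hF, Function.update_of_ne (Finset.mem_erase.mp hj).1]
    have hmarg1 : marg r i a * (r h₀) ^ n
        = r h₀ * (f i a * ∏ j ∈ univ.erase i, Z j) := by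
      unfold marg
      rw [Finset.sum_mul]
      rw [Finset.sum_congr rfl fun g _ => show
        (if g i = a then r g else 0) * (r h₀)^n = if g i = a then r g * (r h₀)^n else 0 by
          by_cases hg : g i = a <;> simp [hg]]
      rw [Finset.sum_congr rfl fun g _ => show
        (if g i = a then r g * (r h₀)^n else 0)
          = if g i = a then r h₀ * ∏ j : L, f j (g j) else 0 by
          by_cases hg : g i = a <;> simp [hg, hident g]]
      rw [Finset.sum_congr rfl fun g _ => show
        (if g i = a then r h₀ * ∏ j : L, f j (g j) else 0)
          = r h₀ * (if g i = a then ∏ j : L, f j (g j) else 0) by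
          by_cases hg : g i = a <;> simp [hg]]
      rw [← Finset.mul_sum, hsum2]
    have hpow : (r h₀) ^ n = r h₀ * (Z i * ∏ j ∈ univ.erase i, Z j) := by
      rw [hsum', Finset.mul_prod_erase univ Z (Finset.mem_univ i)]
    rw [hpow] at hmarg1
    have herasene : (∏ j ∈ univ.erase i, Z j) ≠ 0 :=
      Finset.prod_ne_zero_iff.mpr fun j _ => hZne j
    apply mul_right_cancel₀ (mul_ne_zero hrh₀ herasene)
    linear_combination hmarg1
  -- final assembly
  have hZprod : r h₀ * ∏ i : L, Z i = (r h₀)^n := hsum'.symm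
  have hgoal1 : r g * ∏ i : L, Z i = ∏ i : L, f i (g i) := by
    have h1 := hident g
    rw [hsum'] at h1
    apply mul_left_cancel₀ hrh₀
    linear_combination h1
  have hgoal2 : (∏ i : L, marg r i (g i)) * ∏ i : L, Z i = ∏ i : L, f i (g i) := by
    rw [← Finset.prod_mul_distrib]
    exact Finset.prod_congr rfl fun i _ => hmargf i (g i)
  have hprodZne : (∏ i : L, Z i) ≠ 0 := Finset.prod_ne_zero_iff.mpr fun i _ => hZne i
  apply mul_right_cancel₀ hprodZne
  rw [hgoal1, hgoal2]

end Uniq2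


section Span
set_option linter.unusedSectionVars false
variable {L : Type} [Fintype L] [DecidableEq L] {A : L → Type}
    [∀ i, Fintype (A i)] [∀ i, DecidableEq (A i)]

lemma marg_delta (z : ∀ i, A i) (i : L) (a : A i) :
    (∑ y : ∀ j, A j, if y i = a then (if y = z then (1:ℝ) else 0) else 0)
      = if z i = a then (1:ℝ) else 0 := by
  rw [Finset.sum_congr rfl fun y _ => show
      (if y i = a then (if y = z then (1:ℝ) else 0) else 0)
        = if y = z then (if z i = a then (1:ℝ) else 0) else 0 by
    by_cases hy : y = z
    · subst hy; simp
    · simp [hy]]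
  rw [Finset.sum_ite_eq' univ z (fun _ => if z i = a then (1:ℝ) else 0)]
  simp

lemma marg_span_zero (c : Finset L → ℝ) {v : (∀ i, A i) → ℝ}
    (hv : v ∈ stoichSpan A c) : ∀ (i : L) (a : A i), marg v i a = 0 := by
  induction hv using Submodule.span_induction with
  | mem x hx =>
    obtain ⟨g, h, I, hI, rfl⟩ := hx
    intro i a
    unfold marg
    rw [Finset.sum_congr rfl fun y _ => show
      (if y i = a then ((if y = recomb I g h then (1:ℝ) else 0)
          + (if y = recomb Iᶜ g h then 1 else 0)
          - (if y = g then 1 else 0) - (if y = h then 1 else 0)) else 0)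
        = (if y i = a then (if y = recomb I g h then (1:ℝ) else 0) else 0)
          + (if y i = a then (if y = recomb Iᶜ g h then (1:ℝ) else 0) else 0)
          - (if y i = a then (if y = g then (1:ℝ) else 0) else 0)
          - (if y i = a then (if y = h then (1:ℝ) else 0) else 0) by
      by_cases hy : y i = a <;> simp [hy]]
    simp only [Finset.sum_sub_distrib, Finset.sum_add_distrib]
    rw [marg_delta, marg_delta, marg_delta, marg_delta]
    by_cases hiI : i ∈ I
    · have h1 : recomb I g h i = g i := by simp [recomb, hiI]
      have h2 : recomb Iᶜ g h i = h i := by simp [recomb, hiI]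
      rw [h1, h2]; ring
    · have h1 : recomb I g h i = h i := by simp [recomb, hiI]
      have h2 : recomb Iᶜ g h i = g i := by simp [recomb, hiI]
      rw [h1, h2]; ring
  | zero => intro i a; unfold marg; simp
  | add x y hx hy hx' hy' =>
    intro i a
    have : marg (x + y) i a = marg x i a + marg y i a := by
      unfold marg
      rw [← Finset.sum_add_distrib]
      refine Finset.sum_congr rfl fun g _ => ?_
      by_cases hg : g i = a <;> simp [hg]
    rw [this, hx' i a, hy' i a, add_zero]
  | smul t x hx hx' =>
    intro i a
    have : marg (t • x) i a = t * marg x i a := by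
      unfold marg
      rw [Finset.mul_sum]
      refine Finset.sum_congr rfl fun g _ => ?_
      by_cases hg : g i = a <;> simp [hg]
    rw [this, hx' i a, mul_zero]

lemma marg_sub (u w : (∀ i, A i) → ℝ) (i : L) (a : A i) :
    marg (u - w) i a = marg u i a - marg w i a := by
  unfold marg
  rw [← Finset.sum_sub_distrib]
  refine Finset.sum_congr rfl fun g _ => ?_
  by_cases hg : g i = a <;> simp [hg]

lemma sum_eq_sum_marg (v : (∀ i, A i) → ℝ) (i : L) :
    (∑ a : A i, marg v i a) = ∑ g : ∀ j, A j, v g := by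
  unfold marg
  rw [Finset.sum_comm]
  refine Finset.sum_congr rfl fun g _ => ?_
  rw [Finset.sum_ite_eq univ (g i) (fun _ => v g)]
  simp

lemma recF_mem_span (c : Finset L → ℝ) (hc : ∀ I, 0 ≤ c I) (v : (∀ i, A i) → ℝ) :
    recF c v ∈ stoichSpan A c := by
  have hrw : recF c v = ∑ g : ∀ i, A i, ∑ h : ∀ i, A i, ∑ I : Finset L,
      ((1/4) * c I * v g * v h) • (fun x => (if x = recomb I g h then (1 : ℝ) else 0)
          + (if x = recomb Iᶜ g h then 1 else 0)
          - (if x = g then 1 else 0) - (if x = h then 1 else 0)) := by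
    funext x
    rw [show (∑ g : ∀ i, A i, ∑ h : ∀ i, A i, ∑ I : Finset L,
      ((1/4) * c I * v g * v h) • (fun x => (if x = recomb I g h then (1 : ℝ) else 0)
          + (if x = recomb Iᶜ g h then 1 else 0)
          - (if x = g then 1 else 0) - (if x = h then 1 else 0))) x
      = ∑ g : ∀ i, A i, ∑ h : ∀ i, A i, ∑ I : Finset L,
        ((1/4) * c I * v g * v h) * ((if x = recomb I g h then (1 : ℝ) else 0)
          + (if x = recomb Iᶜ g h then 1 else 0)
          - (if x = g then 1 else 0) - (if x = h then 1 else 0)) by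
      simp [Finset.sum_apply]]
    unfold recF
    rw [Finset.mul_sum]
    refine Finset.sum_congr rfl fun g _ => ?_
    rw [Finset.mul_sum]
    refine Finset.sum_congr rfl fun h _ => ?_
    rw [Finset.mul_sum]
    refine Finset.sum_congr rfl fun I _ => ?_
    ring
  rw [hrw]
  refine Submodule.sum_mem _ fun g _ => Submodule.sum_mem _ fun h _ =>
    Submodule.sum_mem _ fun I _ => ?_
  rcases lt_or_eq_of_le (hc I) with hI | hI
  · exact Submodule.smul_mem _ _ (Submodule.subset_span ⟨g, h, I, hI, rfl⟩)
  · have : ((1:ℝ)/4) * c I * v g * v h = 0 := by rw [← hI]; ring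
    rw [this, zero_smul]
    exact Submodule.zero_mem _

end Span

open Filter

theorem main_thm
    {L : Type} [Fintype L] [DecidableEq L] [Nonempty L]
    (A : L → Type) [∀ i, Fintype (A i)] [∀ i, DecidableEq (A i)]
    (hA : ∀ i, 2 ≤ Fintype.card (A i))
    (c : Finset L → ℝ) (hc : ∀ I, 0 ≤ c I) (hcsym : ∀ I, c I = c Iᶜ)
    (hsep : ∀ i j : L, i ≠ j →
      0 < ∑ I ∈ univ.filter (fun I : Finset L => i ∈ I ∧ j ∉ I), c I)
    (p₀ : (∀ i, A i) → ℝ) (hp0 : ∀ g, 0 ≤ p₀ g) (hp1 : ∑ g : ∀ i, A i, p₀ g = 1)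
    (hm : ∀ (i : L) (a : A i), 0 < marg p₀ i a)
    (p : ℝ → (∀ i, A i) → ℝ)
    (hnn : ∀ t, 0 ≤ t → ∀ g, 0 ≤ p t g)
    (hode : ∀ t, 0 ≤ t → HasDerivAt p (recF c (p t)) t)
    (hinit : p 0 = p₀) :
    ∃ q : (∀ i, A i) → ℝ,
      ((∀ g, 0 < q g) ∧ (q - p₀ ∈ stoichSpan A c) ∧
        (∀ (g h : ∀ i, A i) (I : Finset L), 0 < c I →
          q g * q h = q (recomb I g h) * q (recomb Iᶜ g h))) ∧
      (∀ r : (∀ i, A i) → ℝ, (∀ g, 0 < r g) → r - p₀ ∈ stoichSpan A c →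
        (∀ (g h : ∀ i, A i) (I : Finset L), 0 < c I →
          r g * r h = r (recomb I g h) * r (recomb Iᶜ g h)) → r = q) ∧
      Tendsto p atTop (nhds q) := by
  classical
  have hAne : ∀ i, Nonempty (A i) := fun i =>
    Fintype.card_pos_iff.mp (lt_of_lt_of_le (by norm_num) (hA i))
  -- the candidate equilibrium
  set q : (∀ i, A i) → ℝ := fun g => ∏ i : L, marg p₀ i (g i) with hq
  -- derivative of coordinates
  have hode' : ∀ (t : ℝ), 0 ≤ t → ∀ g : ∀ i, A i,
      HasDerivAt (fun τ => p τ g) (recF c (p t) g) t := fun t ht g =>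
    hasDerivAt_pi.mp (hode t ht) g
  -- mass is conserved
  have hmass : ∀ t, 0 ≤ t → (∑ g : ∀ i, A i, p t g) = 1 := by
    have hd : ∀ t, 0 ≤ t →
        HasDerivAt (fun τ => ∑ g : ∀ i, A i, p τ g) 0 t := by
      intro t ht
      have := HasDerivAt.fun_sum (u := univ) (A := fun (g : ∀ i, A i) (τ : ℝ) => p τ g)
        (A' := fun g => recF c (p t) g) (fun g _ => hode' t ht g)
      rwa [sum_recF_zero c (p t)] at this
    intro t ht
    rw [const_of_deriv_zero hd t ht, hinit, hp1]
  -- derivative of margOn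
  have hdm : ∀ (S : Finset L) (x : ∀ i, A i) (t : ℝ), 0 ≤ t →
      HasDerivAt (fun τ => margOn S (p τ) x) (margOn S (recF c (p t)) x) t := by
    intro S x t ht
    have : ∀ g : ∀ i, A i, HasDerivAt
        (fun τ => if ∀ i ∈ S, g i = x i then p τ g else 0)
        (if ∀ i ∈ S, g i = x i then recF c (p t) g else 0) t := by
      intro g
      by_cases hg : ∀ i ∈ S, g i = x i
      · simp only [if_pos hg]; exact hode' t ht g
      · simp only [if_neg hg]; exact hasDerivAt_const t 0
    exact HasDerivAt.fun_sum (fun g _ => this g)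
  -- the ODE for margOn in normal form
  have hkeyode : ∀ (S : Finset L) (x : ∀ i, A i) (t : ℝ), 0 ≤ t →
      HasDerivAt (fun τ => margOn S (p τ) x)
        (-((1/2) * ∑ I ∈ univ.filter
              (fun I : Finset L => (S ∩ I).Nonempty ∧ S ∩ I ≠ S), c I)
            * margOn S (p t) x
          + (1/2) * ∑ I ∈ univ.filter
              (fun I : Finset L => (S ∩ I).Nonempty ∧ S ∩ I ≠ S),
              c I * (margOn (S ∩ I) (p t) x * margOn (S \ I) (p t) x)) t := by
    intro S x t ht
    have h1 := hdm S x t ht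
    have h2 : margOn S (recF c (p t)) x
        = -((1/2) * ∑ I ∈ univ.filter
              (fun I : Finset L => (S ∩ I).Nonempty ∧ S ∩ I ≠ S), c I)
            * margOn S (p t) x
          + (1/2) * ∑ I ∈ univ.filter
              (fun I : Finset L => (S ∩ I).Nonempty ∧ S ∩ I ≠ S),
              c I * (margOn (S ∩ I) (p t) x * margOn (S \ I) (p t) x) := by
      rw [margOn_recF, hmass t ht]
      rw [← Finset.sum_filter_add_sum_filter_not univ
        (fun I : Finset L => (S ∩ I).Nonempty ∧ S ∩ I ≠ S)
        (fun I => c I * (margOn (S ∩ I) (p t) x * margOn (S \ I) (p t) x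
          - 1 * margOn S (p t) x))]
      have hz : (∑ I ∈ univ.filter
          (fun I : Finset L => ¬((S ∩ I).Nonempty ∧ S ∩ I ≠ S)),
          c I * (margOn (S ∩ I) (p t) x * margOn (S \ I) (p t) x
            - 1 * margOn S (p t) x)) = 0 := by
        refine Finset.sum_eq_zero fun I hI => ?_
        have hcond := (Finset.mem_filter.mp hI).2
        rcases not_and_or.mp hcond with h1' | h1'
        · have hSI : S ∩ I = ∅ := Finset.not_nonempty_iff_eq_empty.mp h1'
          have hSdiff : S \ I = S := by
            ext k
            simp only [Finset.mem_sdiff]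
            constructor
            · exact fun hk => hk.1
            · intro hk
              refine ⟨hk, fun hkI => ?_⟩
              have : k ∈ S ∩ I := Finset.mem_inter.mpr ⟨hk, hkI⟩
              rw [hSI] at this
              exact absurd this (Finset.notMem_empty k)
          rw [hSI, hSdiff, margOn_empty, hmass t ht]
          ring
        · have hSI : S ∩ I = S := not_not.mp h1'
          have hSdiff : S \ I = ∅ := by
            rw [Finset.sdiff_eq_empty_iff_subset]
            intro k hk
            have : k ∈ S ∩ I := hSI.symm ▸ hk
            exact (Finset.mem_inter.mp this).2
          rw [hSI, hSdiff, margOn_empty, hmass t ht]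
          ring
      rw [hz, add_zero]
      have hstep : ∀ I : Finset L,
          c I * (margOn (S ∩ I) (p t) x * margOn (S \ I) (p t) x
            - 1 * margOn S (p t) x)
          = c I * (margOn (S ∩ I) (p t) x * margOn (S \ I) (p t) x)
            - c I * margOn S (p t) x := fun I => by ring
      rw [Finset.sum_congr rfl fun I _ => hstep I, Finset.sum_sub_distrib]
      have hs2 : (∑ I ∈ univ.filter
          (fun I : Finset L => (S ∩ I).Nonempty ∧ S ∩ I ≠ S),
            c I * margOn S (p t) x)
          = (∑ I ∈ univ.filter
            (fun I : Finset L => (S ∩ I).Nonempty ∧ S ∩ I ≠ S), c I)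
              * margOn S (p t) x := (Finset.sum_mul _ _ _).symm
      rw [hs2]
      ring
    rw [h2] at h1
    exact h1

  -- the convergence induction
  have key : ∀ S : Finset L, ∀ x : ∀ i, A i,
      Tendsto (fun t => margOn S (p t) x) atTop
        (nhds (∏ i ∈ S, marg p₀ i (x i))) := by
    intro S
    induction S using Finset.strongInduction with
    | _ S IH =>
      intro x
      by_cases hcard : S.card ≤ 1
      · -- no splitting patterns: constant marginal
        have hempty : univ.filter
            (fun I : Finset L => (S ∩ I).Nonempty ∧ S ∩ I ≠ S) = ∅ := by
          rw [Finset.filter_eq_empty_iff]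
          rintro I - ⟨hne, hneq⟩
          have hsub : S ∩ I ⊂ S :=
            Finset.ssubset_iff_subset_ne.mpr ⟨Finset.inter_subset_left, hneq⟩
          have h1 : 1 ≤ (S ∩ I).card := Finset.card_pos.mpr hne
          have h2 : (S ∩ I).card < S.card := Finset.card_lt_card hsub
          omega
        have hderiv0 : ∀ t, 0 ≤ t →
            HasDerivAt (fun τ => margOn S (p τ) x) 0 t := by
          intro t ht
          have := hkeyode S x t ht
          rw [hempty] at this
          simpa using this
        have hconst := const_of_deriv_zero hderiv0
        have hval : margOn S (p 0) x = ∏ i ∈ S, marg p₀ i (x i) := by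
          rw [hinit]
          rcases Nat.le_one_iff_eq_zero_or_eq_one.mp hcard with h0 | h1
          · rw [Finset.card_eq_zero.mp h0, margOn_empty, hp1, Finset.prod_empty]
          · obtain ⟨i, rfl⟩ := Finset.card_eq_one.mp h1
            rw [margOn_singleton, Finset.prod_singleton]
        refine Tendsto.congr' ?_ (tendsto_const_nhds
          (x := ∏ i ∈ S, marg p₀ i (x i)) (f := atTop))
        filter_upwards [eventually_ge_atTop (0:ℝ)] with t ht
        rw [hconst t ht, hval]
      · -- main case: S has at least two elements
        push_neg at hcard
        have hlam' : 0 < (1:ℝ)/2 * ∑ I ∈ univ.filter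
            (fun I : Finset L => (S ∩ I).Nonempty ∧ S ∩ I ≠ S), c I := by
          obtain ⟨i, hiS, j, hjS, hij⟩ := Finset.one_lt_card.mp hcard
          have hsub : univ.filter (fun I : Finset L => i ∈ I ∧ j ∉ I)
              ⊆ univ.filter (fun I : Finset L => (S ∩ I).Nonempty ∧ S ∩ I ≠ S) := by
            intro I hI
            obtain ⟨hiI, hjI⟩ := (Finset.mem_filter.mp hI).2
            refine Finset.mem_filter.mpr ⟨Finset.mem_univ I, ?_, ?_⟩
            · exact ⟨i, Finset.mem_inter.mpr ⟨hiS, hiI⟩⟩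
            · intro hSI
              have : j ∈ S ∩ I := hSI.symm ▸ hjS
              exact hjI (Finset.mem_inter.mp this).2
          have hle := Finset.sum_le_sum_of_subset_of_nonneg hsub
            (fun I _ _ => hc I)
          have := lt_of_lt_of_le (hsep i j hij) hle
          linarith
        have hbt : Tendsto (fun t => (1:ℝ)/2 * ∑ I ∈ univ.filter
              (fun I : Finset L => (S ∩ I).Nonempty ∧ S ∩ I ≠ S),
                c I * (margOn (S ∩ I) (p t) x * margOn (S \ I) (p t) x))
            atTop (nhds ((1:ℝ)/2 * ∑ I ∈ univ.filter
              (fun I : Finset L => (S ∩ I).Nonempty ∧ S ∩ I ≠ S),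
                c I * ((∏ i ∈ S ∩ I, marg p₀ i (x i))
                  * (∏ i ∈ S \ I, marg p₀ i (x i))))) := by
          refine Tendsto.const_mul _ (tendsto_finset_sum _ fun I hI => ?_)
          obtain ⟨hne, hneq⟩ := (Finset.mem_filter.mp hI).2
          have hss1 : S ∩ I ⊂ S :=
            Finset.ssubset_iff_subset_ne.mpr ⟨Finset.inter_subset_left, hneq⟩
          have hss2 : S \ I ⊂ S := by
            refine Finset.ssubset_iff_subset_ne.mpr ⟨Finset.sdiff_subset, ?_⟩
            intro hSd
            obtain ⟨k, hk⟩ := hne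
            have hkS : k ∈ S := (Finset.mem_inter.mp hk).1
            have hkI : k ∈ I := (Finset.mem_inter.mp hk).2
            have : k ∈ S \ I := hSd.symm ▸ hkS
            exact (Finset.mem_sdiff.mp this).2 hkI
          exact Tendsto.const_mul _ ((IH _ hss1 x).mul (IH _ hss2 x))
        have hbeta : ((1:ℝ)/2 * ∑ I ∈ univ.filter
              (fun I : Finset L => (S ∩ I).Nonempty ∧ S ∩ I ≠ S),
                c I * ((∏ i ∈ S ∩ I, marg p₀ i (x i))
                  * (∏ i ∈ S \ I, marg p₀ i (x i))))
            = ((1:ℝ)/2 * ∑ I ∈ univ.filter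
              (fun I : Finset L => (S ∩ I).Nonempty ∧ S ∩ I ≠ S), c I)
              * ∏ i ∈ S, marg p₀ i (x i) := by
          rw [Finset.sum_congr rfl fun I _ => by
            rw [Finset.prod_inter_mul_prod_diff S I (fun i => marg p₀ i (x i))]]
          rw [show (∑ I ∈ univ.filter
              (fun I : Finset L => (S ∩ I).Nonempty ∧ S ∩ I ≠ S),
              c I * ∏ i ∈ S, marg p₀ i (x i))
            = (∑ I ∈ univ.filter
              (fun I : Finset L => (S ∩ I).Nonempty ∧ S ∩ I ≠ S), c I)
                * ∏ i ∈ S, marg p₀ i (x i) from (Finset.sum_mul _ _ _).symm]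
          ring
        rw [hbeta] at hbt
        have hfin := ode_tendsto hlam' (fun t ht => hkeyode S x t ht) hbt
        rwa [mul_div_cancel_left₀ _ (ne_of_gt hlam')] at hfin
  -- convergence of the full distribution
  have hconv : Tendsto p atTop (nhds q) := by
    rw [tendsto_pi_nhds]
    intro x
    have h := key univ x
    simp only [margOn_univ] at h
    exact h
  have hqpos : ∀ g, 0 < q g := fun g => Finset.prod_pos fun i _ => hm i (g i)
  have hqdb : ∀ (g h : ∀ i, A i) (I : Finset L), 0 < c I →
      q g * q h = q (recomb I g h) * q (recomb Iᶜ g h) := by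
    intro g h I _
    simp only [hq]
    rw [← Finset.prod_mul_distrib, ← Finset.prod_mul_distrib]
    refine Finset.prod_congr rfl fun i _ => ?_
    by_cases hiI : i ∈ I
    · have h1 : recomb I g h i = g i := by simp [recomb, hiI]
      have h2 : recomb Iᶜ g h i = h i := by simp [recomb, hiI]
      rw [h1, h2]
    · have h1 : recomb I g h i = h i := by simp [recomb, hiI]
      have h2 : recomb Iᶜ g h i = g i := by simp [recomb, hiI]
      rw [h1, h2]
      ring
  have hspan_t : ∀ t, 0 ≤ t → p t - p₀ ∈ stoichSpan A c := by
    obtain ⟨W', hcompl⟩ := Submodule.exists_isCompl (stoichSpan A c)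
    set π : ((∀ i, A i) → ℝ) →ₗ[ℝ] W' := W'.linearProjOfIsCompl _ hcompl.symm with hπ
    have hker : LinearMap.ker π = stoichSpan A c :=
      Submodule.linearProjOfIsCompl_ker hcompl.symm
    have hcont : Continuous π := π.continuous_of_finiteDimensional
    set e : ((∀ i, A i) → ℝ) →L[ℝ] W' := ⟨π, hcont⟩ with he
    have hd : ∀ t, 0 ≤ t → HasDerivAt (fun τ => e (p τ - p₀)) 0 t := by
      intro t ht
      have h1 : HasDerivAt (fun τ => p τ - p₀) (recF c (p t)) t :=
        (hode t ht).sub_const p₀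
      have h3 := e.hasFDerivAt.comp_hasDerivAt t h1
      have h4 : e (recF c (p t)) = 0 := by
        have : recF c (p t) ∈ LinearMap.ker π :=
          hker.symm ▸ recF_mem_span c hc (p t)
        exact LinearMap.mem_ker.mp this
      rwa [h4] at h3
    intro t ht
    have hzero := const_of_deriv_zero hd t ht
    have h0 : e (p 0 - p₀) = 0 := by
      rw [hinit, sub_self, map_zero]
    have : e (p t - p₀) = 0 := by rw [hzero, h0]
    have hmem : p t - p₀ ∈ LinearMap.ker π := LinearMap.mem_ker.mpr this
    exact hker ▸ hmem
  have hqspan : q - p₀ ∈ stoichSpan A c := by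
    have hclosed : IsClosed ((stoichSpan A c : Set ((∀ i, A i) → ℝ))) :=
      Submodule.closed_of_finiteDimensional _
    refine hclosed.mem_of_tendsto (hconv.sub tendsto_const_nhds) ?_
    filter_upwards [eventually_ge_atTop (0:ℝ)] with t ht
    exact hspan_t t ht
  refine ⟨q, ⟨hqpos, hqspan, hqdb⟩, ?_, hconv⟩
  intro r hrpos hrspan hrdb
  have hps := pair_swap hc hsep hrdb
  have hrm : ∀ (i : L) (a : A i), marg r i a = marg p₀ i a := by
    intro i a
    have h1 := marg_span_zero c hrspan i a
    rw [marg_sub] at h1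
    linarith
  set i₀ : L := Classical.arbitrary L with hi₀
  have hrsum : ∑ g : ∀ i, A i, r g = 1 := by
    calc ∑ g : ∀ i, A i, r g = ∑ a : A i₀, marg r i₀ a :=
          (sum_eq_sum_marg r i₀).symm
      _ = ∑ a : A i₀, marg p₀ i₀ a :=
          Finset.sum_congr rfl fun a _ => hrm i₀ a
      _ = ∑ g : ∀ i, A i, p₀ g := sum_eq_sum_marg p₀ i₀
      _ = 1 := hp1
  haveI : ∀ i, Nonempty (A i) := hAne
  have hfact := marg_factorization hrpos hrsum hps
  funext g
  rw [hfact g, hq]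
  exact Finset.prod_congr rfl fun i _ => hrm i (g i)


open Filter

/-- **Global convergence in the stoichiometric compatibility class (Theorem 6).**
Under the standing assumption, if the initial condition `p⁰ ∈ S_𝓖` has all marginals
positive, then every differentiable nonnegative solution of the recombination dynamics
starting at `p⁰` converges, as `t → ∞`, to the unique strictly positive
detailed-balancing equilibrium contained in the stoichiometric compatibility class
`S(p⁰) = (p⁰ + S) ∩ ℝ^𝓖₊`. -/
theorem convergence_to_detailed_balancing_equilibrium
    {L : Type} [Fintype L] [DecidableEq L] [Nonempty L]
    (A : L → Type) [∀ i, Fintype (A i)] [∀ i, DecidableEq (A i)]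
    (hA : ∀ i, 2 ≤ Fintype.card (A i))
    (c : Finset L → ℝ) (hc : ∀ I, 0 ≤ c I) (hcsym : ∀ I, c I = c Iᶜ)
    (hsep : ∀ i j : L, i ≠ j →
      0 < ∑ I ∈ univ.filter (fun I : Finset L => i ∈ I ∧ j ∉ I), c I)
    (p₀ : (∀ i, A i) → ℝ) (hp0 : ∀ g, 0 ≤ p₀ g) (hp1 : ∑ g : ∀ i, A i, p₀ g = 1)
    (hm : ∀ (i : L) (a : A i), 0 < marg p₀ i a)
    (p : ℝ → (∀ i, A i) → ℝ)
    (hnn : ∀ t, 0 ≤ t → ∀ g, 0 ≤ p t g)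
    (hode : ∀ t, 0 ≤ t → HasDerivAt p (recF c (p t)) t)
    (hinit : p 0 = p₀) :
    ∃ q : (∀ i, A i) → ℝ,
      ((∀ g, 0 < q g) ∧ (q - p₀ ∈ stoichSpan A c) ∧
        (∀ (g h : ∀ i, A i) (I : Finset L), 0 < c I →
          q g * q h = q (recomb I g h) * q (recomb Iᶜ g h))) ∧
      (∀ r : (∀ i, A i) → ℝ, (∀ g, 0 < r g) → r - p₀ ∈ stoichSpan A c →
        (∀ (g h : ∀ i, A i) (I : Finset L), 0 < c I →
          r g * r h = r (recomb I g h) * r (recomb Iᶜ g h)) → r = q) ∧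
      Tendsto p atTop (nhds q) := by
  exact main_thm A hA c hc hcsym hsep p₀ hp0 hp1 hm p hnn hode hinit
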